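/- Given a commutative square k ∘ f = g ∘ h of functors in which f : A ⟶ B is initial and g : C ⟶ D is a discrete opfibration, there exists a unique functor ℓ : B ⟶ C such that ℓ ∘ f = h and g ∘ ℓ = k. -/

import Mathlib

open CategoryTheory

def IsDiscreteOpfibration {X B : Type*} [Category X] [Category B] (g : X ⥤ B) : Prop :=
  ∀ (x : X) (b : B) (u : g.obj x ⟶ b),
    ∃! p : Σ x' : X, x ⟶ x', ∃ h : g.obj p.1 = b, g.map p.2 = u ≫ eqToHom h.symm

section Aux

variable {Cc Dd : Type} [SmallCategory Cc] [SmallCategory Dd]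
variable {g : Cc ⥤ Dd} (hg : IsDiscreteOpfibration g)

include hg

/-- The chosen lift of `u : g.obj x ⟶ d` as a pair (target, morphism). -/
noncomputable def dlift (x : Cc) {d : Dd} (u : g.obj x ⟶ d) : Σ y : Cc, x ⟶ y :=
  (hg x d u).exists.choose

lemma dlift_spec (x : Cc) {d : Dd} (u : g.obj x ⟶ d) :
    ∃ e : g.obj (dlift hg x u).1 = d, g.map (dlift hg x u).2 = u ≫ eqToHom e.symm :=
  (hg x d u).exists.choose_spec

lemma dlift_uniq {x : Cc} {d : Dd} (u : g.obj x ⟶ d) {y : Cc} (w : x ⟶ y)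
    (e : g.obj y = d) (hw : g.map w = u ≫ eqToHom e.symm) :
    dlift hg x u = ⟨y, w⟩ :=
  (hg x d u).unique (dlift_spec hg x u) ⟨e, hw⟩

noncomputable def dobj (x : Cc) {d : Dd} (u : g.obj x ⟶ d) : Cc := (dlift hg x u).1

noncomputable def dhom (x : Cc) {d : Dd} (u : g.obj x ⟶ d) : x ⟶ dobj hg x u :=
  (dlift hg x u).2

lemma dobj_eq (x : Cc) {d : Dd} (u : g.obj x ⟶ d) : g.obj (dobj hg x u) = d :=
  (dlift_spec hg x u).choose

lemma dmap_eq (x : Cc) {d : Dd} (u : g.obj x ⟶ d) :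
    g.map (dhom hg x u) = u ≫ eqToHom (dobj_eq hg x u).symm :=
  (dlift_spec hg x u).choose_spec

/-- `g` reflects equality of parallel morphisms. -/
lemma gmap_inj {x y : Cc} {w w' : x ⟶ y} (hww : g.map w = g.map w') : w = w' := by
  have h1 := dlift_uniq hg (g.map w) w rfl (by simp)
  have h2 := dlift_uniq hg (g.map w) w' rfl (by simp [hww])
  simpa using h1.symm.trans h2

lemma dlift_comp (x : Cc) {d d' : Dd} (u : g.obj x ⟶ d) (v : d ⟶ d') :
    dlift hg x (u ≫ v) =
      ⟨dobj hg (dobj hg x u) (eqToHom (dobj_eq hg x u) ≫ v),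
        dhom hg x u ≫ dhom hg (dobj hg x u) (eqToHom (dobj_eq hg x u) ≫ v)⟩ :=
  dlift_uniq hg _ _ (dobj_eq hg _ _) (by simp [dmap_eq hg])

lemma dlift_map {x y : Cc} (w : x ⟶ y) {d : Dd} (v : g.obj y ⟶ d) :
    dlift hg x (g.map w ≫ v) = ⟨dobj hg y v, w ≫ dhom hg y v⟩ :=
  dlift_uniq hg _ _ (dobj_eq hg y v) (by simp [dmap_eq hg])

end Aux

section Diag

variable {A B C D : Type} [SmallCategory A] [SmallCategory B]
    [SmallCategory C] [SmallCategory D]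
variable {f : A ⥤ B} {g : C ⥤ D} {h : A ⥤ C} {k : B ⥤ D}

/-- Equality of objects from the commuting square. -/
lemma es (hsq : f ⋙ k = h ⋙ g) (a : A) : k.obj (f.obj a) = g.obj (h.obj a) :=
  Functor.congr_obj hsq a

/-- The canonical morphism associated to an object of the comma category `f / b`. -/
def usc (hsq : f ⋙ k = h ⋙ g) (b : B) (s : CostructuredArrow f b) :
    g.obj (h.obj s.left) ⟶ k.obj b :=
  eqToHom (es hsq s.left).symm ≫ k.map s.hom

noncomputable def phi (hg : IsDiscreteOpfibration g) (hsq : f ⋙ k = h ⋙ g)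
    (b : B) (s : CostructuredArrow f b) : C :=
  dobj hg (h.obj s.left) (usc hsq b s)

variable [f.Initial]

lemma phi_const (hg : IsDiscreteOpfibration g) (hsq : f ⋙ k = h ⋙ g)
    (b : B) (s s' : CostructuredArrow f b) :
    phi hg hsq b s = phi hg hsq b s' := by
  apply constant_of_preserves_morphisms
  intro s1 s2 t
  have hu : usc hsq b s1 = g.map (h.map t.left) ≫ usc hsq b s2 := by
    have hc := Functor.congr_hom hsq t.left
    simp only [Functor.comp_map] at hc
    rw [usc, usc, ← CostructuredArrow.w t, k.map_comp, hc]
    simp [es]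
  rw [phi, phi, hu]
  exact congrArg Sigma.fst (dlift_map hg (h.map t.left) (usc hsq b s2))

noncomputable def lobj (hg : IsDiscreteOpfibration g) (hsq : f ⋙ k = h ⋙ g) (b : B) : C :=
  phi hg hsq b (Classical.arbitrary _)

lemma lobj_eq (hg : IsDiscreteOpfibration g) (hsq : f ⋙ k = h ⋙ g)
    (b : B) (s : CostructuredArrow f b) : phi hg hsq b s = lobj hg hsq b :=
  phi_const hg hsq b s _

lemma glob (hg : IsDiscreteOpfibration g) (hsq : f ⋙ k = h ⋙ g) (b : B) :
    g.obj (lobj hg hsq b) = k.obj b :=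
  dobj_eq hg _ _

lemma dobj_step (hg : IsDiscreteOpfibration g) (hsq : f ⋙ k = h ⋙ g)
    {b b' : B} (β : b ⟶ b') :
    dobj hg (lobj hg hsq b) (eqToHom (glob hg hsq b) ≫ k.map β) = lobj hg hsq b' := by
  set s := Classical.arbitrary (CostructuredArrow f b) with hs
  have h1 : usc hsq b' (CostructuredArrow.mk (s.hom ≫ β)) = usc hsq b s ≫ k.map β := by
    simp [usc]
  have h2 := congrArg Sigma.fst (dlift_comp hg (h.obj s.left) (usc hsq b s) (k.map β))
  calc dobj hg (lobj hg hsq b) (eqToHom (glob hg hsq b) ≫ k.map β)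
      = dobj hg (h.obj s.left) (usc hsq b s ≫ k.map β) := h2.symm
    _ = phi hg hsq b' (CostructuredArrow.mk (s.hom ≫ β)) := congrArg (dobj hg (h.obj s.left)) h1.symm
    _ = lobj hg hsq b' := lobj_eq hg hsq b' _

noncomputable def lmap (hg : IsDiscreteOpfibration g) (hsq : f ⋙ k = h ⋙ g)
    {b b' : B} (β : b ⟶ b') : lobj hg hsq b ⟶ lobj hg hsq b' :=
  dhom hg (lobj hg hsq b) (eqToHom (glob hg hsq b) ≫ k.map β) ≫ eqToHom (dobj_step hg hsq β)

lemma gmap_lmap (hg : IsDiscreteOpfibration g) (hsq : f ⋙ k = h ⋙ g)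
    {b b' : B} (β : b ⟶ b') :
    g.map (lmap hg hsq β) =
      eqToHom (glob hg hsq b) ≫ k.map β ≫ eqToHom (glob hg hsq b').symm := by
  simp [lmap, dmap_eq hg, eqToHom_map]

/-- The diagonal filler. -/
noncomputable def ldiag (hg : IsDiscreteOpfibration g) (hsq : f ⋙ k = h ⋙ g) : B ⥤ C where
  obj := lobj hg hsq
  map := lmap hg hsq
  map_id b := gmap_inj hg (by simp [gmap_lmap hg hsq])
  map_comp β γ := gmap_inj hg (by simp [gmap_lmap hg hsq])

lemma ldiag_comp_g (hg : IsDiscreteOpfibration g) (hsq : f ⋙ k = h ⋙ g) :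
    ldiag hg hsq ⋙ g = k :=
  CategoryTheory.Functor.ext (glob hg hsq) (fun _ _ β => gmap_lmap hg hsq β)

lemma f_comp_ldiag (hg : IsDiscreteOpfibration g) (hsq : f ⋙ k = h ⋙ g) :
    f ⋙ ldiag hg hsq = h := by
  have hobj : ∀ a : A, lobj hg hsq (f.obj a) = h.obj a := by
    intro a
    have h1 := (lobj_eq hg hsq (f.obj a) (CostructuredArrow.mk (𝟙 (f.obj a)))).symm
    have h2 : dlift hg (h.obj a) (usc hsq (f.obj a) (CostructuredArrow.mk (𝟙 (f.obj a)))) =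
        ⟨h.obj a, 𝟙 (h.obj a)⟩ :=
      dlift_uniq hg _ _ (es hsq a).symm (by simp [usc])
    exact h1.trans (congrArg Sigma.fst h2)
  refine CategoryTheory.Functor.ext hobj (fun a a' t => ?_)
  apply gmap_inj hg
  have hc := Functor.congr_hom hsq t
  simp only [Functor.comp_map] at hc
  simp [ldiag, gmap_lmap hg hsq, eqToHom_map, hc, es]
  erw [eqToHom_map]

lemma ldiag_unique (hg : IsDiscreteOpfibration g) (hsq : f ⋙ k = h ⋙ g)
    (l' : B ⥤ C) (hf : f ⋙ l' = h) (hk : l' ⋙ g = k) :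
    l' = ldiag hg hsq := by
  have hobj : ∀ b : B, l'.obj b = lobj hg hsq b := by
    intro b
    set s := Classical.arbitrary (CostructuredArrow f b) with hs
    have hw : g.map (eqToHom (Functor.congr_obj hf s.left).symm ≫ l'.map s.hom) =
        usc hsq b s ≫ eqToHom (Functor.congr_obj hk b).symm := by
      have hc := Functor.congr_hom hk s.hom
      simp only [Functor.comp_map] at hc
      simp [usc, eqToHom_map, hc, es]
    have h2 := dlift_uniq hg (usc hsq b s) _ (Functor.congr_obj hk b) hw
    exact ((congrArg Sigma.fst h2).symm).trans (lobj_eq hg hsq b s)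
  refine CategoryTheory.Functor.ext hobj (fun b b' β => ?_)
  apply gmap_inj hg
  have hc := Functor.congr_hom hk β
  simp only [Functor.comp_map] at hc
  simp [gmap_lmap hg hsq, eqToHom_map, hc, ldiag]
  erw [eqToHom_map]
  simp

end Diag

/-- Orthogonality of initial functors and discrete opfibrations: any commutative
square `k ∘ f = g ∘ h` with `f` initial and `g` a discrete opfibration has a unique
diagonal filler. -/
theorem stmt14 {A B C D : Type} [SmallCategory A] [SmallCategory B]
    [SmallCategory C] [SmallCategory D]
    (f : A ⥤ B) (g : C ⥤ D) (h : A ⥤ C) (k : B ⥤ D)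
    [f.Initial] (hg : IsDiscreteOpfibration g)
    (hsq : f ⋙ k = h ⋙ g) :
    ∃! l : B ⥤ C, f ⋙ l = h ∧ l ⋙ g = k := by
  exact ⟨ldiag hg hsq, ⟨f_comp_ldiag hg hsq, ldiag_comp_g hg hsq⟩,
    fun l' ⟨hf, hk⟩ => ldiag_unique hg hsq l' hf hk⟩
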